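/- Fix α > 0 and d ≥ 1, let ω = (√(α² + 4) − α)/2, let B ∈ ℝ^{d×d} be the lower bidiagonal matrix with B_{ii} = 1 for i = 1,…,d−1, B_{dd} = √(αω), B_{i+1,i} = −1 for i = 1,…,d−1, and all other entries zero, let c = (ω, 0, …, 0)ᵀ ∈ ℝ^d, and define H : ℝ^d × ℝ^d → ℝ by H(x, y) = (α/2)‖x‖² + xᵀ(By − c) − (α/2)‖y‖². Then H is √(8 + 2α²)-smooth, i.e., the map (x, y) ↦ (∇_x H(x,y), ∇_y H(x,y)) is √(8 + 2α²)-Lipschitz on ℝ^d × ℝ^d. -/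

import Mathlib

lemma aux_grad {d : ℕ} (a : ℝ) (b : EuclideanSpace ℝ (Fin d)) (C : ℝ) (u : EuclideanSpace ℝ (Fin d)) :
    HasGradientAt (fun v : EuclideanSpace ℝ (Fin d) =>
      a / 2 * ‖v‖ ^ 2 + (∑ i, v i * b i) + C) (a • u + b) u := by
  rw [hasGradientAt_iff_hasFDerivAt]
  have h1 : HasFDerivAt (fun v : EuclideanSpace ℝ (Fin d) => ‖v‖ ^ 2)
      (2 • (innerSL ℝ u)) u := (hasStrictFDerivAt_norm_sq u).hasFDerivAt
  have h2 : HasFDerivAt (fun v : EuclideanSpace ℝ (Fin d) => ∑ i, v i * b i)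
      (innerSL ℝ b) u := by
    have he : (fun v : EuclideanSpace ℝ (Fin d) => ∑ i, v i * b i)
        = fun v => (innerSL ℝ b) v := by
      funext v
      simp [PiLp.inner_apply, RCLike.inner_apply, mul_comm]
    rw [he]
    exact (innerSL ℝ b).hasFDerivAt
  have h3 := ((h1.const_mul (a / 2)).add h2).add_const C
  refine h3.congr_fderiv ?_
  ext v
  simp [inner_add_left, inner_smul_left, real_inner_smul_left]
  ring

lemma aux_norm_sq {d : ℕ} (z : EuclideanSpace ℝ (Fin d)) : ‖z‖ ^ 2 = ∑ i, z i ^ 2 := by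
  rw [EuclideanSpace.norm_eq, Real.sq_sqrt (by positivity)]
  simp [sq_abs]

lemma aux_card {d : ℕ} (P : Fin d → Prop) [DecidablePred P]
    (hP : ∀ a b, P a → P b → a = b) : (∑ j, if P j then (1 : ℝ) else 0) ≤ 1 := by
  rw [Finset.sum_boole]
  have : (Finset.univ.filter P).card ≤ 1 :=
    Finset.card_le_one.mpr fun a ha b hb =>
      hP a b (by simpa using ha) (by simpa using hb)
  exact_mod_cast this

lemma aux_mat {d : ℕ} (M : Fin d → Fin d → ℝ)
    (hr : ∀ i, (∑ j, |M i j|) ≤ 2) (hc : ∀ j, (∑ i, |M i j|) ≤ 2)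
    (v : Fin d → ℝ) : (∑ i, (∑ j, M i j * v j) ^ 2) ≤ 4 * ∑ j, v j ^ 2 := by
  have key : ∀ i, (∑ j, M i j * v j) ^ 2 ≤ 2 * ∑ j, |M i j| * v j ^ 2 := by
    intro i
    have h1 : (∑ j, M i j * v j) ^ 2 ≤ (∑ j, |M i j| * |v j|) ^ 2 := by
      have := Finset.abs_sum_le_sum_abs (fun j => M i j * v j) Finset.univ
      simp only [abs_mul] at this
      calc (∑ j, M i j * v j) ^ 2 = |∑ j, M i j * v j| ^ 2 := (sq_abs _).symm
        _ ≤ (∑ j, |M i j| * |v j|) ^ 2 := by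
            apply pow_le_pow_left₀ (abs_nonneg _) this
    have h2 : (∑ j, |M i j| * |v j|) ^ 2 ≤
        (∑ j, Real.sqrt |M i j| ^ 2) * (∑ j, (Real.sqrt |M i j| * |v j|) ^ 2) := by
      have cs := Finset.sum_mul_sq_le_sq_mul_sq Finset.univ
        (fun j => Real.sqrt |M i j|) (fun j => Real.sqrt |M i j| * |v j|)
      calc (∑ j, |M i j| * |v j|) ^ 2
          = (∑ j, Real.sqrt |M i j| * (Real.sqrt |M i j| * |v j|)) ^ 2 := by
            congr 1; apply Finset.sum_congr rfl; intro j _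
            rw [← mul_assoc, Real.mul_self_sqrt (abs_nonneg _)]
        _ ≤ _ := cs
    have h3 : (∑ j, Real.sqrt |M i j| ^ 2) = ∑ j, |M i j| := by
      apply Finset.sum_congr rfl; intro j _; exact Real.sq_sqrt (abs_nonneg _)
    have h4 : (∑ j, (Real.sqrt |M i j| * |v j|) ^ 2) = ∑ j, |M i j| * v j ^ 2 := by
      apply Finset.sum_congr rfl; intro j _
      rw [mul_pow, Real.sq_sqrt (abs_nonneg _), sq_abs]
    rw [h3, h4] at h2
    have h5 : (∑ j, |M i j|) * (∑ j, |M i j| * v j ^ 2) ≤ 2 * ∑ j, |M i j| * v j ^ 2 := by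
      apply mul_le_mul_of_nonneg_right (hr i)
      positivity
    linarith
  calc (∑ i, (∑ j, M i j * v j) ^ 2) ≤ ∑ i, 2 * ∑ j, |M i j| * v j ^ 2 :=
        Finset.sum_le_sum fun i _ => key i
    _ = 2 * ∑ j, (∑ i, |M i j|) * v j ^ 2 := by
        rw [← Finset.mul_sum, Finset.sum_comm]
        congr 1; apply Finset.sum_congr rfl; intro j _
        rw [Finset.sum_mul]
    _ ≤ 2 * ∑ j, 2 * v j ^ 2 := by
        apply mul_le_mul_of_nonneg_left _ (by norm_num)
        apply Finset.sum_le_sum; intro j _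
        exact mul_le_mul_of_nonneg_right (hc j) (sq_nonneg _)
    _ = 4 * ∑ j, v j ^ 2 := by rw [← Finset.mul_sum]; ring

theorem hard_instance_H_smooth
    {d : ℕ} (hd : 1 ≤ d) (α : ℝ) (hα : 0 < α)
    (ω : ℝ) (hω : ω = (Real.sqrt (α ^ 2 + 4) - α) / 2)
    (B : Fin d → Fin d → ℝ)
    (hB : B = fun (i j : Fin d) =>
      if i = j then (if (i : ℕ) = d - 1 then Real.sqrt (α * ω) else 1)
      else if (i : ℕ) = (j : ℕ) + 1 then -1 else 0)
    (c : Fin d → ℝ) (hc : c = fun (i : Fin d) => if (i : ℕ) = 0 then ω else 0)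
    (H : EuclideanSpace ℝ (Fin d) → EuclideanSpace ℝ (Fin d) → ℝ)
    (hH : H = fun x y =>
      α / 2 * ‖x‖ ^ 2 + (∑ i, x i * ((∑ j, B i j * y j) - c i)) - α / 2 * ‖y‖ ^ 2) :
    ∀ x x' y y' : EuclideanSpace ℝ (Fin d),
      Real.sqrt (‖gradient (fun u => H u y) x - gradient (fun u => H u y') x'‖ ^ 2 +
          ‖gradient (fun v => H x v) y - gradient (fun v => H x' v) y'‖ ^ 2)
        ≤ Real.sqrt (8 + 2 * α ^ 2) * Real.sqrt (‖x - x'‖ ^ 2 + ‖y - y'‖ ^ 2) := by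
  intro x x' y y'
  -- facts about ω
  have hω0 : 0 ≤ ω := by
    have h1 : Real.sqrt (α ^ 2) ≤ Real.sqrt (α ^ 2 + 4) :=
      Real.sqrt_le_sqrt (by linarith)
    rw [Real.sqrt_sq hα.le] at h1
    rw [hω]; linarith
  have hαω : α * ω ≤ 1 := by
    have h1 : Real.sqrt (α ^ 2 + 4) ≤ (α ^ 2 + 2) / α := by
      rw [show (α ^ 2 + 2) / α = Real.sqrt (((α ^ 2 + 2) / α) ^ 2) from
        (Real.sqrt_sq (by positivity)).symm]
      apply Real.sqrt_le_sqrt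
      rw [div_pow, le_div_iff₀ (by positivity)]
      nlinarith
    have h2 : α * Real.sqrt (α ^ 2 + 4) ≤ α ^ 2 + 2 := by
      have := mul_le_mul_of_nonneg_left h1 hα.le
      rwa [mul_div_cancel₀ _ (ne_of_gt hα)] at this
    rw [hω]; nlinarith
  -- entrywise bound on B
  have habs : ∀ i j : Fin d, |B i j| ≤
      (if i = j then (1 : ℝ) else 0) + (if (i : ℕ) = (j : ℕ) + 1 then 1 else 0) := by
    intro i j
    rw [hB]
    by_cases h1 : i = j
    · simp only [h1, if_pos rfl]
      have : |if (j : ℕ) = d - 1 then Real.sqrt (α * ω) else (1:ℝ)| ≤ 1 := by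
        split
        · rw [abs_of_nonneg (Real.sqrt_nonneg _)]
          exact Real.sqrt_le_one.mpr hαω
        · norm_num
      have h2 : (0:ℝ) ≤ if (j : ℕ) = (j : ℕ) + 1 then (1:ℝ) else 0 := by positivity
      calc |if (j : ℕ) = d - 1 then Real.sqrt (α * ω) else (1:ℝ)| ≤ 1 := this
        _ ≤ 1 + _ := le_add_of_nonneg_right h2
    · simp only [if_neg h1]
      by_cases h2 : (i : ℕ) = (j : ℕ) + 1
      · simp [h2]
      · simp [h2]
  have hrow : ∀ i, (∑ j, |B i j|) ≤ 2 := by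
    intro i
    calc (∑ j, |B i j|) ≤ ∑ j, ((if i = j then (1 : ℝ) else 0)
          + (if (i : ℕ) = (j : ℕ) + 1 then 1 else 0)) :=
        Finset.sum_le_sum fun j _ => habs i j
      _ = (∑ j, if i = j then (1:ℝ) else 0)
          + ∑ j : Fin d, (if (i : ℕ) = (j : ℕ) + 1 then (1:ℝ) else 0) := Finset.sum_add_distrib
      _ ≤ 1 + 1 := by
          apply add_le_add
          · rw [Finset.sum_ite_eq]; simp
          · exact aux_card _ fun a b ha hb => Fin.ext (by omega)
      _ = 2 := by norm_num
  have hcol : ∀ j, (∑ i, |B i j|) ≤ 2 := by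
    intro j
    calc (∑ i, |B i j|) ≤ ∑ i, ((if i = j then (1 : ℝ) else 0)
          + (if (i : ℕ) = (j : ℕ) + 1 then 1 else 0)) :=
        Finset.sum_le_sum fun i _ => habs i j
      _ = (∑ i, if i = j then (1:ℝ) else 0)
          + ∑ i : Fin d, (if (i : ℕ) = (j : ℕ) + 1 then (1:ℝ) else 0) := Finset.sum_add_distrib
      _ ≤ 1 + 1 := by
          apply add_le_add
          · rw [Finset.sum_ite_eq']; simp
          · exact aux_card _ fun a b ha hb => Fin.ext (by omega)
      _ = 2 := by norm_num
  -- gradients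
  have gx : ∀ Y X : EuclideanSpace ℝ (Fin d), gradient (fun u => H u Y) X
      = α • X + (WithLp.equiv 2 (Fin d → ℝ)).symm (fun i => (∑ j, B i j * Y j) - c i) := by
    intro Y X
    apply HasGradientAt.gradient
    have h := aux_grad α ((WithLp.equiv 2 (Fin d → ℝ)).symm (fun i => (∑ j, B i j * Y j) - c i))
      (-(α / 2 * ‖Y‖ ^ 2)) X
    have he : (fun u => H u Y) = (fun v : EuclideanSpace ℝ (Fin d) =>
        α / 2 * ‖v‖ ^ 2 + (∑ i, v i *
          ((WithLp.equiv 2 (Fin d → ℝ)).symm (fun i => (∑ j, B i j * Y j) - c i) i))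
          + (-(α / 2 * ‖Y‖ ^ 2))) := by
      funext v
      rw [hH]
      simp only [WithLp.equiv_symm_apply, PiLp.toLp_apply]
      ring
    rw [he]
    exact h
  have gy : ∀ X Y : EuclideanSpace ℝ (Fin d), gradient (fun v => H X v) Y
      = (-α) • Y + (WithLp.equiv 2 (Fin d → ℝ)).symm (fun j => ∑ i, B i j * X i) := by
    intro X Y
    apply HasGradientAt.gradient
    have h := aux_grad (-α) ((WithLp.equiv 2 (Fin d → ℝ)).symm (fun j => ∑ i, B i j * X i))
      (α / 2 * ‖X‖ ^ 2 - ∑ i, X i * c i) Y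
    have he : (fun v => H X v) = (fun v : EuclideanSpace ℝ (Fin d) =>
        (-α) / 2 * ‖v‖ ^ 2 + (∑ j, v j *
          ((WithLp.equiv 2 (Fin d → ℝ)).symm (fun j => ∑ i, B i j * X i) j))
          + (α / 2 * ‖X‖ ^ 2 - ∑ i, X i * c i)) := by
      funext v
      rw [hH]
      simp only [WithLp.equiv_symm_apply, PiLp.toLp_apply]
      have hswap : (∑ i, X i * (∑ j, B i j * v j)) = ∑ j, v j * (∑ i, B i j * X i) := by
        simp only [Finset.mul_sum]
        rw [Finset.sum_comm]
        apply Finset.sum_congr rfl; intro j _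
        apply Finset.sum_congr rfl; intro i _; ring
      simp only [mul_sub, Finset.sum_sub_distrib, hswap]
      ring
    rw [he]
    exact h
  -- coordinates of gradient differences
  set Δx : Fin d → ℝ := fun i => x i - x' i with hΔx
  set Δy : Fin d → ℝ := fun j => y j - y' j with hΔy
  have hx2 : ‖x - x'‖ ^ 2 = ∑ i, Δx i ^ 2 := by
    rw [aux_norm_sq]
    apply Finset.sum_congr rfl; intro i _
    simp [hΔx]
  have hy2 : ‖y - y'‖ ^ 2 = ∑ j, Δy j ^ 2 := by
    rw [aux_norm_sq]
    apply Finset.sum_congr rfl; intro j _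
    simp [hΔy]
  have hGx : ‖gradient (fun u => H u y) x - gradient (fun u => H u y') x'‖ ^ 2
      ≤ 2 * α ^ 2 * (∑ i, Δx i ^ 2) + 8 * (∑ j, Δy j ^ 2) := by
    rw [gx y x, gx y' x', aux_norm_sq]
    have hco : ∀ i : Fin d,
        ((α • x + (WithLp.equiv 2 (Fin d → ℝ)).symm (fun i => (∑ j, B i j * y j) - c i))
        - (α • x' + (WithLp.equiv 2 (Fin d → ℝ)).symm (fun i => (∑ j, B i j * y' j) - c i))) i
        = α * Δx i + ∑ j, B i j * Δy j := by
      intro i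
      simp only [PiLp.sub_apply, PiLp.add_apply, PiLp.smul_apply,
        WithLp.equiv_symm_apply, PiLp.toLp_apply, smul_eq_mul, hΔx, hΔy, mul_sub, Finset.sum_sub_distrib]
      ring
    refine le_trans (Finset.sum_le_sum
      (g := fun i => 2 * (α * Δx i) ^ 2 + 2 * (∑ j, B i j * Δy j) ^ 2)
      fun i _ => ?_) ?_
    · rw [hco i]
      show _ ≤ 2 * (α * Δx i) ^ 2 + 2 * (∑ j, B i j * Δy j) ^ 2
      nlinarith [sq_nonneg (α * Δx i - ∑ j, B i j * Δy j)]
    · rw [Finset.sum_add_distrib]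
      have hm := aux_mat B hrow hcol Δy
      have e1 : (∑ i, 2 * (α * Δx i) ^ 2) = 2 * α ^ 2 * (∑ i, Δx i ^ 2) := by
        rw [Finset.mul_sum]; apply Finset.sum_congr rfl; intro i _; ring
      have e2 : (∑ i, 2 * (∑ j, B i j * Δy j) ^ 2) = 2 * ∑ i, (∑ j, B i j * Δy j) ^ 2 := by
        rw [Finset.mul_sum]
      rw [e1, e2]; linarith
  have hGy : ‖gradient (fun v => H x v) y - gradient (fun v => H x' v) y'‖ ^ 2
      ≤ 8 * (∑ i, Δx i ^ 2) + 2 * α ^ 2 * (∑ j, Δy j ^ 2) := by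
    rw [gy x y, gy x' y', aux_norm_sq]
    have hco : ∀ j : Fin d,
        (((-α) • y + (WithLp.equiv 2 (Fin d → ℝ)).symm (fun j => ∑ i, B i j * x i))
        - ((-α) • y' + (WithLp.equiv 2 (Fin d → ℝ)).symm (fun j => ∑ i, B i j * x' i))) j
        = (∑ i, B i j * Δx i) + (-α) * Δy j := by
      intro j
      simp only [PiLp.sub_apply, PiLp.add_apply, PiLp.smul_apply,
        WithLp.equiv_symm_apply, PiLp.toLp_apply, smul_eq_mul, hΔx, hΔy, mul_sub, Finset.sum_sub_distrib]
      ring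
    refine le_trans (Finset.sum_le_sum
      (g := fun j => 2 * (∑ i, B i j * Δx i) ^ 2 + 2 * ((-α) * Δy j) ^ 2)
      fun j _ => ?_) ?_
    · rw [hco j]
      show _ ≤ 2 * (∑ i, B i j * Δx i) ^ 2 + 2 * ((-α) * Δy j) ^ 2
      nlinarith [sq_nonneg ((∑ i, B i j * Δx i) - (-α) * Δy j)]
    · rw [Finset.sum_add_distrib]
      have hm := aux_mat (fun a b => B b a) hcol hrow Δx
      have e1 : (∑ j, 2 * ((-α) * Δy j) ^ 2) = 2 * α ^ 2 * (∑ j, Δy j ^ 2) := by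
        rw [Finset.mul_sum]; apply Finset.sum_congr rfl; intro j _; ring
      have e2 : (∑ j, 2 * (∑ i, B i j * Δx i) ^ 2) = 2 * ∑ j, (∑ i, B i j * Δx i) ^ 2 := by
        rw [Finset.mul_sum]
      rw [e1, e2]; linarith
  -- final assembly
  rw [← Real.sqrt_mul (by positivity)]
  apply Real.sqrt_le_sqrt
  rw [hx2, hy2]
  nlinarith [hGx, hGy, Finset.sum_nonneg (fun i (_ : i ∈ Finset.univ) => sq_nonneg (Δx i)),
    Finset.sum_nonneg (fun j (_ : j ∈ Finset.univ) => sq_nonneg (Δy j))]
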